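/- arXiv:2001.00943 — 3 statements merged into one kernel-verified Lean document; each statement's English description precedes it below -/
import Mathlib

section
/- (Proposition 1, Aissi et al.) For every feasible solution x ∈ Ω and every scenario s ∈ S, the regret of x in s is at most the regret of x in the scenario s(x) induced by x, i.e., r_x^s ≤ r_x^{s(x)}. Consequently, the supremum over all scenarios of the regret of x is attained at s(x), and the robustness cost satisfies R_x = r_x^{s(x)} = c^{s(x)} x − min_{y∈Ω} c^{s(x)} y. -/
open Finset

noncomputable section

/-- The cost of a 0-1 vector `x` in a scenario `s`: `∑ i, s i * x i`. -/
def cost {n : ℕ} (s x : Fin n → ℝ) : ℝ := ∑ i, s i * x i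

/-- `x` is a binary (0-1) vector. -/
def IsBinary {n : ℕ} (x : Fin n → ℝ) : Prop := ∀ i, x i = 0 ∨ x i = 1

/-- The set of scenarios determined by the interval costs `[l i, u i]`. -/
def Scen {n : ℕ} (l u : Fin n → ℝ) : Set (Fin n → ℝ) :=
  {s | ∀ i, l i ≤ s i ∧ s i ≤ u i}

/-- The scenario `s(x)` induced by `x`: `u i` if `x i = 1`, `l i` otherwise. -/
def inducedScen {n : ℕ} (l u x : Fin n → ℝ) : Fin n → ℝ :=
  fun i => if x i = 1 then u i else l i

/-- The regret of `x` in scenario `s`: `c^s x - min_{y ∈ Ω} c^s y`. -/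
def regret {n : ℕ} (Ω : Finset (Fin n → ℝ)) (hΩ : Ω.Nonempty) (s x : Fin n → ℝ) : ℝ :=
  cost s x - Ω.inf' hΩ fun y => cost s y

/-- The robustness cost of `x`: the supremum of its regret over all scenarios. -/
def robCost {n : ℕ} (l u : Fin n → ℝ) (Ω : Finset (Fin n → ℝ)) (hΩ : Ω.Nonempty)
    (x : Fin n → ℝ) : ℝ :=
  sSup ((fun s => regret Ω hΩ s x) '' Scen l u)

/-- The `Γ`-relaxed robustness cost of `x`:
`c^{s(x)} x - min_{y ∈ Γ} c^{s(x)} y`. -/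
def relRobCost {n : ℕ} (l u : Fin n → ℝ) (Γ : Finset (Fin n → ℝ)) (hΓ : Γ.Nonempty)
    (x : Fin n → ℝ) : ℝ :=
  cost (inducedScen l u x) x - Γ.inf' hΓ fun y => cost (inducedScen l u x) y

lemma cost_diff_le {n : ℕ} (l u : Fin n → ℝ) (hlu : ∀ i, l i ≤ u i)
    (s x y : Fin n → ℝ) (hs : s ∈ Scen l u) (hx : IsBinary x) (hy : IsBinary y) :
    cost s x - cost s y ≤ cost (inducedScen l u x) x - cost (inducedScen l u x) y := by
  unfold cost
  rw [← Finset.sum_sub_distrib, ← Finset.sum_sub_distrib]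
  apply Finset.sum_le_sum
  intro i _
  have h1 := (hs i).1
  have h2 := (hs i).2
  unfold inducedScen
  rcases hx i with hxi | hxi <;> rcases hy i with hyi | hyi <;>
    simp [hxi, hyi] <;> nlinarith [hlu i]

/-- Proposition 1, Aissi et al.: for every `x ∈ Ω` and every scenario `s`,
`r_x^s ≤ r_x^{s(x)}`; consequently the robustness cost is attained at `s(x)` and
`R_x = r_x^{s(x)} = c^{s(x)} x - min_{y ∈ Ω} c^{s(x)} y`. -/
theorem regret_maximized_at_induced_scenario
    {n : ℕ} (hn : 0 < n) (l u : Fin n → ℝ)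
    (hl : ∀ i, 0 ≤ l i) (hlu : ∀ i, l i ≤ u i)
    (Ω : Finset (Fin n → ℝ)) (hΩ : Ω.Nonempty) (hbin : ∀ x ∈ Ω, IsBinary x)
    (x : Fin n → ℝ) (hx : x ∈ Ω) :
    (∀ s ∈ Scen l u, regret Ω hΩ s x ≤ regret Ω hΩ (inducedScen l u x) x) ∧
    robCost l u Ω hΩ x = regret Ω hΩ (inducedScen l u x) x ∧
    robCost l u Ω hΩ x
      = cost (inducedScen l u x) x - Ω.inf' hΩ (fun y => cost (inducedScen l u x) y) := by
  have hxb := hbin x hx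
  have key : ∀ s ∈ Scen l u, regret Ω hΩ s x ≤ regret Ω hΩ (inducedScen l u x) x := by
    intro s hs
    obtain ⟨y, hy, hymin⟩ := Finset.exists_mem_eq_inf' hΩ (fun y => cost s y)
    obtain ⟨z, hz, hzmin⟩ := Finset.exists_mem_eq_inf' hΩ (fun y => cost (inducedScen l u x) y)
    unfold regret
    rw [hymin, hzmin]
    have h1 := cost_diff_le l u hlu s x y hs hxb (hbin y hy)
    have h2 : cost (inducedScen l u x) z ≤ cost (inducedScen l u x) y := by
      rw [← hzmin]; exact Finset.inf'_le _ hy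
    linarith
  have hmem : inducedScen l u x ∈ Scen l u := by
    intro i
    unfold inducedScen
    by_cases h : x i = 1 <;> simp [h, hlu i, le_refl, hl i]
  have hmem' : regret Ω hΩ (inducedScen l u x) x ∈
      (fun s => regret Ω hΩ s x) '' Scen l u := ⟨_, hmem, rfl⟩
  have heq : robCost l u Ω hΩ x = regret Ω hΩ (inducedScen l u x) x := by
    unfold robCost
    apply le_antisymm
    · apply csSup_le ⟨_, hmem'⟩
      rintro r ⟨s, hs, rfl⟩
      exact key s hs
    · refine le_csSup ⟨regret Ω hΩ (inducedScen l u x) x, ?_⟩ hmem'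
      rintro r ⟨s, hs, rfl⟩
      exact key s hs
  exact ⟨key, heq, heq⟩
end
end

section
/- (Correctness of the stopping condition) Let Γ ⊆ Ω be nonempty and let x* ∈ Ω be a Γ-relaxed robust solution, i.e., x* minimizes R_x^Γ over all x ∈ Ω. If R_{x*}^Γ ≥ R_{x*}, then x* is a robust solution, i.e., x* minimizes the robustness cost R_x over all x ∈ Ω, and moreover R_{x*}^Γ = R_{x*}. -/
open Finset

noncomputable section

/-- correctness of the stopping condition: if `x*` is a
`Γ`-relaxed robust solution and `R_{x*}^Γ ≥ R_{x*}`, then `x*` is a robust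
solution and `R_{x*}^Γ = R_{x*}`. -/
theorem stopping_condition_correct
    {n : ℕ} (hn : 0 < n) (l u : Fin n → ℝ)
    (hl : ∀ i, 0 ≤ l i) (hlu : ∀ i, l i ≤ u i)
    (Ω : Finset (Fin n → ℝ)) (hΩ : Ω.Nonempty) (hbin : ∀ x ∈ Ω, IsBinary x)
    (Γ : Finset (Fin n → ℝ)) (hΓ : Γ.Nonempty) (hΓΩ : Γ ⊆ Ω)
    (xstar : Fin n → ℝ) (hxstar : xstar ∈ Ω)
    (hmin : ∀ x ∈ Ω, relRobCost l u Γ hΓ xstar ≤ relRobCost l u Γ hΓ x)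
    (hstop : robCost l u Ω hΩ xstar ≤ relRobCost l u Γ hΓ xstar) :
    (∀ x ∈ Ω, robCost l u Ω hΩ xstar ≤ robCost l u Ω hΩ x) ∧
    relRobCost l u Γ hΓ xstar = robCost l u Ω hΩ xstar := by
  have hscen : ∀ x : Fin n → ℝ, inducedScen l u x ∈ Scen l u := by
    intro x i
    unfold inducedScen
    split
    · exact ⟨hlu i, le_refl _⟩
    · exact ⟨le_refl _, hlu i⟩
  have hbdd : ∀ z ∈ Ω, BddAbove ((fun s => regret Ω hΩ s z) '' Scen l u) := by
    intro z hz
    refine ⟨cost u z, ?_⟩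
    rintro r ⟨s, hs, rfl⟩
    have hz' := hbin z hz
    have h1 : cost s z ≤ cost u z := by
      apply Finset.sum_le_sum
      intro i _
      have hzi : 0 ≤ z i := by
        rcases hz' i with h | h <;> rw [h] <;> norm_num
      exact mul_le_mul_of_nonneg_right (hs i).2 hzi
    have h2 : (0:ℝ) ≤ Ω.inf' hΩ (fun y => cost s y) := by
      apply Finset.le_inf'
      intro y hy
      apply Finset.sum_nonneg
      intro i _
      have hsi : 0 ≤ s i := le_trans (hl i) (hs i).1
      have hyi : 0 ≤ y i := by
        rcases hbin y hy i with h | h <;> rw [h] <;> norm_num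
      exact mul_nonneg hsi hyi
    show cost s z - Ω.inf' hΩ (fun y => cost s y) ≤ cost u z
    linarith
  have key : ∀ z ∈ Ω, relRobCost l u Γ hΓ z ≤ robCost l u Ω hΩ z := by
    intro z hz
    have h1 : relRobCost l u Γ hΓ z ≤ regret Ω hΩ (inducedScen l u z) z := by
      unfold relRobCost regret
      have hinf : Ω.inf' hΩ (fun y => cost (inducedScen l u z) y)
          ≤ Γ.inf' hΓ (fun y => cost (inducedScen l u z) y) := by
        apply Finset.le_inf'
        intro y hy
        exact Finset.inf'_le _ (hΓΩ hy)
      linarith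
    have h2 : regret Ω hΩ (inducedScen l u z) z ≤ robCost l u Ω hΩ z :=
      le_csSup (hbdd z hz) ⟨_, hscen z, rfl⟩
    linarith
  have heq : relRobCost l u Γ hΓ xstar = robCost l u Ω hΩ xstar :=
    le_antisymm (key xstar hxstar) hstop
  refine ⟨fun x hx => ?_, heq⟩
  calc robCost l u Ω hΩ xstar = relRobCost l u Γ hΓ xstar := heq.symm
    _ ≤ relRobCost l u Γ hΓ x := hmin x hx
    _ ≤ robCost l u Ω hΩ x := key x hx
end
end

section
/- (Validity of the MILP reformulation F) The optimal value of the min-max regret problem equals the optimal value of the reformulation F: min_{x∈Ω} R_x = inf { Σ_i u_i x_i − ρ : x ∈ Ω, ρ ∈ ℝ, and ρ ≤ Σ_i (l_i + (u_i − l_i) x_i) ȳ_i for all ȳ ∈ Ω }, and the infimum on the right-hand side is attained; moreover, x* ∈ Ω is robust if and only if there exists ρ* ∈ ℝ such that (x*, ρ*) attains this infimum. -/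
open Finset

noncomputable section

/-- Feasible set of the MILP reformulation `F`: pairs `(x, ρ)` with `x ∈ Ω` and
`ρ ≤ ∑ i, (l i + (u i - l i) * x i) * ȳ i` for all `ȳ ∈ Ω`. -/
def FeasF {n : ℕ} (l u : Fin n → ℝ) (Ω : Finset (Fin n → ℝ)) :
    Set ((Fin n → ℝ) × ℝ) :=
  {p | p.1 ∈ Ω ∧ ∀ yb ∈ Ω, p.2 ≤ ∑ i, (l i + (u i - l i) * p.1 i) * yb i}

/-- Objective of the MILP reformulation `F`: `∑ i, u i * x i - ρ`. -/
def objF {n : ℕ} (u : Fin n → ℝ) (p : (Fin n → ℝ) × ℝ) : ℝ :=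
  (∑ i, u i * p.1 i) - p.2

private lemma inducedScen_eq' {n : ℕ} (l u x : Fin n → ℝ) (hx : IsBinary x) (i : Fin n) :
    inducedScen l u x i = l i + (u i - l i) * x i := by
  rcases hx i with h | h <;> simp [inducedScen, h]

private lemma inducedScen_mem' {n : ℕ} (l u x : Fin n → ℝ) (hlu : ∀ i, l i ≤ u i) :
    inducedScen l u x ∈ Scen l u := by
  intro i
  unfold inducedScen
  split <;> exact ⟨by simp [hlu i], by simp [hlu i]⟩

private lemma cost_induced_self' {n : ℕ} (l u x : Fin n → ℝ) (hx : IsBinary x) :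
    cost (inducedScen l u x) x = ∑ i, u i * x i := by
  unfold cost
  refine Finset.sum_congr rfl fun i _ => ?_
  rcases hx i with h | h <;> simp [inducedScen, h]

private lemma diff_le' {n : ℕ} (l u x y s : Fin n → ℝ) (hx : IsBinary x) (hy : IsBinary y)
    (hs : s ∈ Scen l u) :
    cost s x - cost s y ≤ cost (inducedScen l u x) x - cost (inducedScen l u x) y := by
  unfold cost
  rw [← Finset.sum_sub_distrib, ← Finset.sum_sub_distrib]
  apply Finset.sum_le_sum
  intro i _
  obtain ⟨h1, h2⟩ := hs i
  rcases hx i with h | h <;> rcases hy i with h' | h' <;>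
    simp [inducedScen, h, h'] <;> nlinarith

private lemma robCost_eq' {n : ℕ} (l u : Fin n → ℝ) (hlu : ∀ i, l i ≤ u i)
    (Ω : Finset (Fin n → ℝ)) (hΩ : Ω.Nonempty) (hbin : ∀ x ∈ Ω, IsBinary x)
    (x : Fin n → ℝ) (hx : IsBinary x) :
    robCost l u Ω hΩ x = regret Ω hΩ (inducedScen l u x) x := by
  unfold robCost
  apply IsGreatest.csSup_eq
  constructor
  · exact ⟨inducedScen l u x, inducedScen_mem' l u x hlu, rfl⟩
  · rintro a ⟨s, hs, rfl⟩
    unfold regret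
    obtain ⟨y0, hy0, hy0eq⟩ := Ω.exists_mem_eq_inf' hΩ (fun y => cost s y)
    beta_reduce
    rw [hy0eq]
    have h1 : Ω.inf' hΩ (fun y => cost (inducedScen l u x) y) ≤ cost (inducedScen l u x) y0 :=
      Finset.inf'_le _ hy0
    have h2 := diff_le' l u x y0 s hx (hbin y0 hy0) hs
    linarith

/-- validity of the MILP reformulation `F`:
`min_{x ∈ Ω} R_x = inf { ∑ i, u i * x i - ρ : (x, ρ) feasible for F }`, the
infimum is attained, and `x*` is robust iff some `(x*, ρ*)` attains it. -/
theorem milp_reformulation_valid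
    {n : ℕ} (hn : 0 < n) (l u : Fin n → ℝ)
    (hl : ∀ i, 0 ≤ l i) (hlu : ∀ i, l i ≤ u i)
    (Ω : Finset (Fin n → ℝ)) (hΩ : Ω.Nonempty) (hbin : ∀ x ∈ Ω, IsBinary x) :
    (Ω.inf' hΩ (fun x => robCost l u Ω hΩ x) = sInf (objF u '' FeasF l u Ω)) ∧
    (∃ p ∈ FeasF l u Ω, objF u p = sInf (objF u '' FeasF l u Ω)) ∧
    (∀ xstar ∈ Ω,
      ((∀ x ∈ Ω, robCost l u Ω hΩ xstar ≤ robCost l u Ω hΩ x) ↔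
        ∃ ρstar : ℝ, (xstar, ρstar) ∈ FeasF l u Ω ∧
          objF u (xstar, ρstar) = sInf (objF u '' FeasF l u Ω))) := by

  classical
  set m : (Fin n → ℝ) → ℝ :=
    fun x => Ω.inf' hΩ (fun y => ∑ i, (l i + (u i - l i) * x i) * y i) with hm
  have hcost : ∀ x, IsBinary x → ∀ y,
      cost (inducedScen l u x) y = ∑ i, (l i + (u i - l i) * x i) * y i := by
    intro x hx y
    exact Finset.sum_congr rfl fun i _ => by rw [inducedScen_eq' l u x hx i]
  have key : ∀ x ∈ Ω, robCost l u Ω hΩ x = (∑ i, u i * x i) - m x := by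
    intro x hxΩ
    have hx := hbin x hxΩ
    rw [robCost_eq' l u hlu Ω hΩ hbin x hx]
    unfold regret
    rw [cost_induced_self' l u x hx, hm]
    congr 1
    exact Finset.inf'_congr hΩ rfl fun y _ => hcost x hx y
  have feas_iff : ∀ p : (Fin n → ℝ) × ℝ, p ∈ FeasF l u Ω ↔ p.1 ∈ Ω ∧ p.2 ≤ m p.1 := by
    intro p
    constructor
    · rintro ⟨h1, h2⟩
      exact ⟨h1, Finset.le_inf' hΩ _ fun y hy => h2 y hy⟩
    · rintro ⟨h1, h2⟩
      exact ⟨h1, fun y hy => h2.trans (Finset.inf'_le _ hy)⟩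
  obtain ⟨x0, hx0Ω, hx0⟩ := Ω.exists_mem_eq_inf' hΩ (fun x => robCost l u Ω hΩ x)
  have hleast : IsLeast (objF u '' FeasF l u Ω)
      (Ω.inf' hΩ (fun x => robCost l u Ω hΩ x)) := by
    constructor
    · refine ⟨(x0, m x0), (feas_iff _).2 ⟨hx0Ω, le_refl _⟩, ?_⟩
      have := key x0 hx0Ω
      rw [hx0]
      simp only [objF]
      linarith
    · rintro a ⟨p, hp, rfl⟩
      obtain ⟨h1, h2⟩ := (feas_iff p).1 hp
      have hk := key p.1 h1
      have : Ω.inf' hΩ (fun x => robCost l u Ω hΩ x) ≤ robCost l u Ω hΩ p.1 :=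
        Finset.inf'_le _ h1
      simp only [objF]
      linarith
  have hinf : Ω.inf' hΩ (fun x => robCost l u Ω hΩ x) = sInf (objF u '' FeasF l u Ω) :=
    (hleast.csInf_eq).symm
  refine ⟨hinf, ⟨(x0, m x0), (feas_iff _).2 ⟨hx0Ω, le_refl _⟩, ?_⟩, ?_⟩
  · have := key x0 hx0Ω
    rw [← hinf, hx0]
    simp only [objF]
    linarith
  · intro xstar hxs
    constructor
    · intro hrob
      refine ⟨m xstar, (feas_iff _).2 ⟨hxs, le_refl _⟩, ?_⟩
      have hk := key xstar hxs
      have heq : robCost l u Ω hΩ xstar = Ω.inf' hΩ (fun x => robCost l u Ω hΩ x) := by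
        apply le_antisymm _ (Finset.inf'_le _ hxs)
        exact Finset.le_inf' hΩ _ fun y hy => hrob y hy
      rw [← hinf, ← heq]
      simp only [objF]
      linarith
    · rintro ⟨ρ, hfeas, hobj⟩
      obtain ⟨h1, h2⟩ := (feas_iff _).1 hfeas
      have hk := key xstar hxs
      intro x hx
      have h3 : Ω.inf' hΩ (fun x => robCost l u Ω hΩ x) ≤ robCost l u Ω hΩ x :=
        Finset.inf'_le _ hx
      rw [← hinf] at hobj
      simp only [objF] at hobj
      simp only at h2
      linarith
end
end
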